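/- Assume every edge of G has finite level, i.e., L(e) < ∞ for all e ∈ E. Let P = v_0 v_1 ⋯ v_n be any taut path in G, with edges e_i = v_{i−1}v_i and levels ℓ_i = L(e_i). Then there exists an integer k with 0 ≤ k ≤ n such that ℓ_i < ℓ_{i+1} for all 1 ≤ i ≤ k−1 and ℓ_i > ℓ_{i+1} for all k+1 ≤ i ≤ n−1; that is, the level sequence consists of a strictly increasing prefix ℓ_1 < ℓ_2 < ⋯ < ℓ_k followed by a strictly decreasing suffix ℓ_{k+1} > ℓ_{k+2} > ⋯ > ℓ_n (with no constraint between ℓ_k and ℓ_{k+1}). -/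

import Mathlib

open SimpleGraph

variable {V : Type*}

/-- The set of levels (under `L`) of taut neighbours of edge `e` at vertex `v`:
edges `f` of `G` incident to `v` such that the turn from `e` to `f` at `v` is taut. -/
def tautNbrLevels (G : SimpleGraph V) (taut : V → Sym2 V → Sym2 V → Prop)
    (L : Sym2 V → ℕ∞) (v : V) (e : Sym2 V) : Set ℕ∞ :=
  {n | ∃ f ∈ G.edgeSet, v ∈ f ∧ taut v e f ∧ n = L f}

/-- The monotone operator on `E → ℕ∞` whose least fixed point defines edge levels:
`(levelOp L) e = 1 + min over the endpoints v of e of sup {L f : f taut neighbour of e at v}`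
(with `sSup ∅ = 0`). -/
noncomputable def levelOp (G : SimpleGraph V) (taut : V → Sym2 V → Sym2 V → Prop)
    (L : Sym2 V → ℕ∞) (e : Sym2 V) : ℕ∞ :=
  1 + ⨅ v ∈ e, sSup (tautNbrLevels G taut L v e)

/-- `L` is the edge-level function: the pointwise least fixed point (on edges of `G`)
of the level operator. -/
def IsEdgeLevel (G : SimpleGraph V) (taut : V → Sym2 V → Sym2 V → Prop)
    (L : Sym2 V → ℕ∞) : Prop :=
  (∀ e ∈ G.edgeSet, L e = levelOp G taut L e) ∧
  ∀ L' : Sym2 V → ℕ∞, (∀ e ∈ G.edgeSet, L' e = levelOp G taut L' e) →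
    ∀ e ∈ G.edgeSet, L e ≤ L' e

/-- `p 0, p 1, …, p n` is a taut path in `G`: a walk of length `n ≥ 1` such that at every
interior vertex `p i` (`1 ≤ i ≤ n-1`), the turn from edge `p (i-1) p i` to edge
`p i p (i+1)` is taut. -/
def IsTautPath (G : SimpleGraph V) (taut : V → Sym2 V → Sym2 V → Prop)
    (n : ℕ) (p : ℕ → V) : Prop :=
  1 ≤ n ∧ (∀ i < n, G.Adj (p i) (p (i + 1))) ∧
  ∀ i, 1 ≤ i → i < n → taut (p i) s(p (i - 1), p i) s(p i, p (i + 1))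

/-- If every edge of `G` has finite level, then the level sequence of any taut path
consists of a strictly increasing prefix `ℓ 1 < ⋯ < ℓ k` followed by a strictly
decreasing suffix `ℓ (k+1) > ⋯ > ℓ n`. -/
theorem taut_path_levels_unimodal
    [Fintype V] (G : SimpleGraph V)
    (taut : V → Sym2 V → Sym2 V → Prop)
    (taut_symm : ∀ v e f, taut v e f → taut v f e)
    (L : Sym2 V → ℕ∞) (hL : IsEdgeLevel G taut L)
    (hfin : ∀ e ∈ G.edgeSet, L e < ⊤)
    (n : ℕ) (p : ℕ → V) (hp : IsTautPath G taut n p)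
    (ℓ : ℕ → ℕ∞) (hℓ : ∀ i, ℓ i = L s(p (i - 1), p i)) :
    ∃ k, k ≤ n ∧
      (∀ i, 1 ≤ i → i + 1 ≤ k → ℓ i < ℓ (i + 1)) ∧
      (∀ i, k + 1 ≤ i → i + 1 ≤ n → ℓ (i + 1) < ℓ i) := by
  classical
  obtain ⟨hn, hadj, htaut⟩ := hp
  -- key lemma: once non-increasing, strictly decreasing afterwards
  have key : ∀ i, 1 ≤ i → i + 1 < n → ℓ (i + 1) ≤ ℓ i → ℓ (i + 2) < ℓ (i + 1) := by
    intro i h1 h2 hle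
    by_contra hcon
    push_neg at hcon
    have he : s(p i, p (i + 1)) ∈ G.edgeSet := G.mem_edgeSet.mpr (hadj i (by omega))
    have hℓ1 : ℓ (i + 1) = L s(p i, p (i + 1)) := hℓ (i + 1)
    have hℓ2 : ℓ (i + 2) = L s(p (i + 1), p (i + 2)) := hℓ (i + 2)
    have hbig : L s(p i, p (i + 1)) ≤
        ⨅ v ∈ s(p i, p (i + 1)), sSup (tautNbrLevels G taut L v s(p i, p (i + 1))) := by
      refine le_iInf₂ fun v hv => ?_
      rcases Sym2.mem_iff.mp hv with h | h
      · subst h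
        have hfadj : G.Adj (p (i - 1)) (p i) := by
          have := hadj (i - 1) (by omega)
          rwa [Nat.sub_add_cancel h1] at this
        have hmem : L s(p (i - 1), p i) ∈
            tautNbrLevels G taut L (p i) s(p i, p (i + 1)) :=
          ⟨s(p (i - 1), p i), G.mem_edgeSet.mpr hfadj, Sym2.mem_mk_right _ _,
            taut_symm _ _ _ (htaut i h1 (by omega)), rfl⟩
        calc L s(p i, p (i + 1)) = ℓ (i + 1) := hℓ1.symm
          _ ≤ ℓ i := hle
          _ = L s(p (i - 1), p i) := hℓ i
          _ ≤ _ := le_sSup hmem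
      · subst h
        have hmem : L s(p (i + 1), p (i + 2)) ∈
            tautNbrLevels G taut L (p (i + 1)) s(p i, p (i + 1)) :=
          ⟨s(p (i + 1), p (i + 2)), G.mem_edgeSet.mpr (hadj (i + 1) h2),
            Sym2.mem_mk_left _ _, htaut (i + 1) (by omega) h2, rfl⟩
        calc L s(p i, p (i + 1)) = ℓ (i + 1) := hℓ1.symm
          _ ≤ ℓ (i + 2) := hcon
          _ = L s(p (i + 1), p (i + 2)) := hℓ2
          _ ≤ _ := le_sSup hmem
    have heq := hL.1 _ he
    rw [levelOp] at heq
    have : 1 + L s(p i, p (i + 1)) ≤ L s(p i, p (i + 1)) := by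
      calc 1 + L s(p i, p (i + 1)) ≤
          1 + ⨅ v ∈ s(p i, p (i + 1)), sSup (tautNbrLevels G taut L v s(p i, p (i + 1))) :=
            add_le_add_right hbig 1
        _ = L s(p i, p (i + 1)) := heq.symm
    rw [add_comm, ENat.add_one_le_iff (hfin _ he).ne] at this
    exact lt_irrefl _ this
  by_cases hex : ∃ i, 1 ≤ i ∧ i < n ∧ ℓ (i + 1) ≤ ℓ i
  · set k := Nat.find hex with hk
    obtain ⟨hk1, hkn, hkle⟩ := Nat.find_spec hex
    refine ⟨k, by omega, ?_, ?_⟩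
    · intro i hi1 hik
      have hni := Nat.find_min hex (m := i) (by omega)
      push_neg at hni
      exact lt_of_not_ge fun h => absurd (hni hi1 (by omega)) (by simp [h])
    · have claim : ∀ d, k + d < n →
          ℓ (k + d + 1) ≤ ℓ (k + d) ∧ (1 ≤ d → ℓ (k + d + 1) < ℓ (k + d)) := by
        intro d
        induction d with
        | zero => exact fun _ => ⟨hkle, by omega⟩
        | succ d ih =>
          intro hlt
          have hprev := (ih (by omega)).1
          have hkey := key (k + d) (by omega) (by omega) hprev
          have : k + d + 2 = k + (d + 1) + 1 := by omega
          rw [this] at hkey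
          exact ⟨hkey.le, fun _ => hkey⟩
      intro i hi hin
      obtain ⟨d, rfl⟩ : ∃ d, i = k + d := ⟨i - k, by omega⟩
      exact (claim d (by omega)).2 (by omega)
  · push_neg at hex
    refine ⟨n, le_refl n, ?_, ?_⟩
    · intro i hi1 hin
      exact hex i hi1 (by omega)
    · intro i hi hin
      omega
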